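/- The Herschel graph is not hamiltonian. -/
import Mathlib


/-- The Herschel graph: the bipartite planar graph on 11 vertices and 18 edges,
the smallest non-hamiltonian polyhedral graph, with parts of sizes 5 and 6. -/
def herschelGraph : SimpleGraph (Fin 11) :=
  SimpleGraph.fromRel (fun i j =>
    (i, j) ∈ ([(0, 2), (0, 3), (0, 4), (1, 2), (1, 3), (1, 5), (2, 6), (2, 7), (3, 8), (3, 9),
      (4, 6), (4, 8), (5, 7), (5, 9), (6, 10), (7, 10), (8, 10), (9, 10)] :
        List (Fin 11 × Fin 11)))

/-- A 2-coloring witnessing bipartiteness. -/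
def herschelColor : Fin 11 → ZMod 2 := fun v =>
  if v = 0 ∨ v = 1 ∨ v = 6 ∨ v = 7 ∨ v = 8 ∨ v = 9 then 0 else 1

lemma herschel_adj_color : ∀ u v : Fin 11, herschelGraph.Adj u v →
    herschelColor v = herschelColor u + 1 := by
  have key : ∀ u v : Fin 11, u ≠ v →
      ((u, v) ∈ ([(0, 2), (0, 3), (0, 4), (1, 2), (1, 3), (1, 5), (2, 6), (2, 7), (3, 8), (3, 9),
      (4, 6), (4, 8), (5, 7), (5, 9), (6, 10), (7, 10), (8, 10), (9, 10)] :
        List (Fin 11 × Fin 11)) ∨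
       (v, u) ∈ ([(0, 2), (0, 3), (0, 4), (1, 2), (1, 3), (1, 5), (2, 6), (2, 7), (3, 8), (3, 9),
      (4, 6), (4, 8), (5, 7), (5, 9), (6, 10), (7, 10), (8, 10), (9, 10)] :
        List (Fin 11 × Fin 11))) →
      herschelColor v = herschelColor u + 1 := by decide
  intro u v h
  rw [herschelGraph, SimpleGraph.fromRel_adj] at h
  exact key u v h.1 h.2

lemma herschel_walk_parity {a b : Fin 11} (p : herschelGraph.Walk a b) :
    herschelColor b = herschelColor a + p.length := by
  induction p with
  | nil => simp
  | cons h p ih =>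
    rw [SimpleGraph.Walk.length_cons, ih, herschel_adj_color _ _ h]
    push_cast
    ring

/-- The Herschel graph is not hamiltonian. -/
theorem herschel_not_hamiltonian :
    ¬ ∃ (a : Fin 11) (p : herschelGraph.Walk a a), p.IsHamiltonianCycle := by
  rintro ⟨a, p, hp⟩
  have h1 := herschel_walk_parity p
  rw [hp.length_eq] at h1
  simp [Fintype.card_fin] at h1
  exact absurd h1 (by decide)
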